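/- Let m, k, i be positive integers with gcd(2^i, 2^k − 1) = 1 and gcd(2^k − 1, 2^m + 1) = 1, and U the subgroup of order 2^m + 1 of F_{2^{2m}}^×. Then the composite map x ↦ ((x^{2^k+1} + x^{2^k} + 1)/(x^{2^k+1} + x + 1))^{2^i} is a bijection of U. -/

import Mathlib

private lemma two_pow_mod_three_even {k : ℕ} (h : Even k) : 2 ^ k % 3 = 1 := by
  obtain ⟨j, rfl⟩ := h
  have h4 : 2 ^ (j + j) = 4 ^ j := by rw [← two_mul, pow_mul]; norm_num
  rw [h4, Nat.pow_mod]; norm_num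

private lemma two_pow_mod_three_odd {k : ℕ} (h : Odd k) : 2 ^ k % 3 = 2 := by
  obtain ⟨j, rfl⟩ := h
  have h4 : 2 ^ (2 * j + 1) = 4 ^ j * 2 := by rw [pow_succ, pow_mul]; norm_num
  rw [h4, Nat.mul_mod, Nat.pow_mod]; norm_num

private lemma dvd_two_pow_gcd_sub_one {g a b : ℕ} (ha : g ∣ 2 ^ a - 1) (hb : g ∣ 2 ^ b - 1) :
    g ∣ 2 ^ Nat.gcd a b - 1 := by
  have key : ∀ c : ℕ, g ∣ 2 ^ c - 1 ↔ (2 : ZMod g) ^ c = 1 := by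
    intro c
    rw [← ZMod.natCast_eq_zero_iff, Nat.cast_sub Nat.one_le_two_pow]
    push_cast
    rw [sub_eq_zero]
  rw [key] at ha hb ⊢
  exact orderOf_dvd_iff_pow_eq_one.mp
    (Nat.dvd_gcd (orderOf_dvd_of_pow_eq_one ha) (orderOf_dvd_of_pow_eq_one hb))

private lemma sq_helper (c : ℕ) : (2 ^ c + 1) * (2 ^ c - 1) = 2 ^ (2 * c) - 1 := by
  have h1 : 1 ≤ 2 ^ c := Nat.one_le_two_pow
  have h2 : 2 ^ (2 * c) = 2 ^ c * 2 ^ c := by rw [two_mul, pow_add]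
  rw [h2]
  have h3 : 1 ≤ 2 ^ c * 2 ^ c := Nat.one_le_iff_ne_zero.mpr (by positivity)
  zify [h1, h3]
  ring

private lemma odd_of_dvd_odd {g n : ℕ} (h : g ∣ n) (hn : Odd n) : Odd g := by
  rw [Nat.odd_iff] at hn ⊢
  rcases Nat.even_or_odd g with he | ho
  · obtain ⟨r, rfl⟩ := he
    obtain ⟨t, rfl⟩ := h
    have he2 : (r + r) * t = 2 * (r * t) := by ring
    rw [he2, Nat.mul_mod_right] at hn
    omega
  · exact Nat.odd_iff.mp ho

private lemma eq_one_of_dvd_two_of_odd {g : ℕ} (h2 : g ∣ 2) (ho : Odd g) : g = 1 := by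
  rcases (Nat.dvd_prime Nat.prime_two).mp h2 with h | h
  · exact h
  · exact absurd (h ▸ ho) (by decide)

private lemma gcd_two_pow_add_one_add_one {k m : ℕ} (hk0 : 0 < k) (hm0 : 0 < m)
    (hko : Odd k) (hme : Even m) : Nat.gcd (2 ^ k + 1) (2 ^ m + 1) = 1 := by
  set g := Nat.gcd (2 ^ k + 1) (2 ^ m + 1) with hg
  have hg1 : g ∣ 2 ^ k + 1 := Nat.gcd_dvd_left _ _
  have hg2 : g ∣ 2 ^ m + 1 := Nat.gcd_dvd_right _ _
  have h2k : g ∣ 2 ^ (2 * k) - 1 := by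
    rw [← sq_helper k]; exact hg1.mul_right _
  have h2m : g ∣ 2 ^ (2 * m) - 1 := by
    rw [← sq_helper m]; exact hg2.mul_right _
  have hmain : g ∣ 2 ^ (2 * Nat.gcd k m) - 1 := by
    rw [← Nat.gcd_mul_left 2 k m]; exact dvd_two_pow_gcd_sub_one h2k h2m
  have hoddgcd : Odd (Nat.gcd k m) := odd_of_dvd_odd (Nat.gcd_dvd_left k m) hko
  have hdm : 2 * Nat.gcd k m ∣ m := by
    refine Nat.Coprime.mul_dvd_of_dvd_of_dvd ?_ hme.two_dvd (Nat.gcd_dvd_right k m)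
    exact Nat.coprime_two_left.mpr hoddgcd
  obtain ⟨t, ht⟩ := hdm
  have hgm : g ∣ 2 ^ m - 1 := by
    rw [ht]; exact hmain.trans (by rw [pow_mul 2 _ t]; simpa only [one_pow] using Nat.sub_dvd_pow_sub_pow _ 1 t)
  have h2pm : 1 ≤ 2 ^ m := Nat.one_le_two_pow
  have hgd2 : g ∣ 2 := by
    have := Nat.dvd_sub hg2 hgm
    have he : 2 ^ m + 1 - (2 ^ m - 1) = 2 := by omega
    rwa [he] at this
  exact eq_one_of_dvd_two_of_odd hgd2
    (odd_of_dvd_odd hg2 (by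
      have : Even (2 ^ m) := by
        exact (Nat.even_pow).mpr ⟨even_two, hm0.ne'⟩
      exact this.add_one))

private lemma gcd_two_pow_add_one_sub_one {k m : ℕ} (hk0 : 0 < k) (hm0 : 0 < m)
    (hko : Odd k) (hmo : Odd m) : Nat.gcd (2 ^ k + 1) (2 ^ m - 1) = 1 := by
  set g := Nat.gcd (2 ^ k + 1) (2 ^ m - 1) with hg
  have hg1 : g ∣ 2 ^ k + 1 := Nat.gcd_dvd_left _ _
  have hg2 : g ∣ 2 ^ m - 1 := Nat.gcd_dvd_right _ _
  have h2k : g ∣ 2 ^ (2 * k) - 1 := by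
    rw [← sq_helper k]; exact hg1.mul_right _
  have hmain : g ∣ 2 ^ Nat.gcd (2 * k) m - 1 := dvd_two_pow_gcd_sub_one h2k hg2
  have hoddgcd : Odd (Nat.gcd (2 * k) m) := odd_of_dvd_odd (Nat.gcd_dvd_right _ m) hmo
  have hdk : Nat.gcd (2 * k) m ∣ k := by
    refine (Nat.Coprime.dvd_of_dvd_mul_left ?_ (Nat.gcd_dvd_left (2 * k) m))
    exact Nat.coprime_two_right.mpr hoddgcd
  obtain ⟨t, ht⟩ := hdk
  have hgk : g ∣ 2 ^ k - 1 := by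
    rw [ht]; exact hmain.trans (by rw [pow_mul 2 _ t]; simpa only [one_pow] using Nat.sub_dvd_pow_sub_pow _ 1 t)
  have h2pk : 1 ≤ 2 ^ k := Nat.one_le_two_pow
  have hgd2 : g ∣ 2 := by
    have := Nat.dvd_sub hg1 hgk
    have he : 2 ^ k + 1 - (2 ^ k - 1) = 2 := by omega
    rwa [he] at this
  refine eq_one_of_dvd_two_of_odd hgd2 (odd_of_dvd_odd hg2 ?_)
  have hev : Even (2 ^ m) := (Nat.even_pow).mpr ⟨even_two, hm0.ne'⟩
  have h1m : 1 ≤ 2 ^ m := Nat.one_le_two_pow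
  rcases hev with ⟨r, hr⟩
  exact ⟨r - 1, by omega⟩

private lemma frob_inj2 {F : Type*} [Field F] [CharP F 2] (t : ℕ) {a b : F}
    (h : a ^ 2 ^ t = b ^ 2 ^ t) : a = b := by
  haveI : Fact (Nat.Prime 2) := ⟨Nat.prime_two⟩
  have hs : (a - b) ^ 2 ^ t = 0 := by rw [sub_pow_char_pow, h, sub_self]
  have h0 := pow_eq_zero_iff (n := 2 ^ t) (by positivity) |>.mp hs
  exact sub_eq_zero.mp h0
theorem stmt_16 (m k i : ℕ) (hm : 0 < m) (hk : 0 < k) (hi : 0 < i)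
    (hgcd1 : Nat.gcd (2 ^ i) (2 ^ k - 1) = 1)
    (hgcd2 : Nat.gcd (2 ^ k - 1) (2 ^ m + 1) = 1)
    (F : Type*) [Field F] [Fintype F] (hF : Fintype.card F = 2 ^ (2 * m)) :
    Set.BijOn
      (fun x : F => ((x ^ (2 ^ k + 1) + x ^ 2 ^ k + 1) / (x ^ (2 ^ k + 1) + x + 1)) ^ 2 ^ i)
      {x : F | x ^ (2 ^ m + 1) = 1} {x : F | x ^ (2 ^ m + 1) = 1} := by
  classical
  -- characteristic 2
  obtain ⟨p, hp⟩ := CharP.exists F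
  haveI := hp
  obtain ⟨n, hpp, hcard'⟩ := FiniteField.card F p
  have hp2 : p = 2 := by
    have h1 : p ∣ 2 ^ (2 * m) := by
      rw [← hF, hcard']; exact dvd_pow_self p n.2.ne'
    exact (Nat.prime_dvd_prime_iff_eq hpp Nat.prime_two).mp (hpp.dvd_of_dvd_pow h1)
  subst hp2
  haveI hf2 : Fact (Nat.Prime 2) := ⟨Nat.prime_two⟩
  have htwo : (2 : F) = 0 := CharTwo.two_eq_zero
  have hne_of : ∀ z w : F, z + w = 0 → z = w := fun z w h => by
    linear_combination h - w * htwo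
  -- basic U facts
  have hU0 : ∀ z : F, z ^ (2 ^ m + 1) = 1 → z ≠ 0 := by
    intro z hz h0
    rw [h0, zero_pow (by positivity)] at hz
    exact zero_ne_one hz
  have hxQx : ∀ z : F, z ^ (2 ^ m + 1) = 1 → z ^ 2 ^ m * z = 1 := by
    intro z hz; rw [← pow_succ]; exact hz
  -- conjugation identities
  have key1 : ∀ z : F, z ^ (2 ^ m + 1) = 1 →
      z ^ (2 ^ k + 1) + z ^ 2 ^ k + 1
        = z ^ (2 ^ k + 1) * (z ^ (2 ^ k + 1) + z + 1) ^ 2 ^ m := by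
    intro z hz
    have e1 : (z ^ (2 ^ k + 1)) ^ 2 ^ m * z ^ (2 ^ k + 1) = 1 := by
      rw [← pow_succ, pow_right_comm, hz, one_pow]
    have e2 : z ^ 2 ^ m * z = 1 := hxQx z hz
    rw [add_pow_char_pow, add_pow_char_pow, one_pow]
    linear_combination (-1 : F) * e1 - z ^ 2 ^ k * e2
  have key2 : ∀ z : F, z ^ (2 ^ m + 1) = 1 →
      z ^ (2 ^ k + 1) + z + 1
        = z ^ (2 ^ k + 1) * (z ^ (2 ^ k + 1) + z ^ 2 ^ k + 1) ^ 2 ^ m := by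
    intro z hz
    have e1 : (z ^ (2 ^ k + 1)) ^ 2 ^ m * z ^ (2 ^ k + 1) = 1 := by
      rw [← pow_succ, pow_right_comm, hz, one_pow]
    have e3 : (z ^ 2 ^ k) ^ 2 ^ m * z ^ 2 ^ k = 1 := by
      rw [pow_right_comm, ← mul_pow, hxQx z hz, one_pow]
    rw [add_pow_char_pow, add_pow_char_pow, one_pow]
    linear_combination (-1 : F) * e1 - z * e3
  -- z = 1 from z^{2^k} = z
  have hone : ∀ z : F, z ^ (2 ^ m + 1) = 1 → z ^ 2 ^ k = z → z = 1 := by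
    intro z hz hq
    have hz0 : z ≠ 0 := hU0 z hz
    have h1 : z ^ (2 ^ k - 1) * z = 1 * z := by
      rw [← pow_succ, Nat.sub_add_cancel Nat.one_le_two_pow, hq, one_mul]
    have h2 : z ^ (2 ^ k - 1) = 1 := mul_right_cancel₀ hz0 h1
    have hd1 : orderOf z ∣ 2 ^ k - 1 := orderOf_dvd_of_pow_eq_one h2
    have hd2 : orderOf z ∣ 2 ^ m + 1 := orderOf_dvd_of_pow_eq_one hz
    have : orderOf z ∣ 1 := hgcd2 ▸ Nat.dvd_gcd hd1 hd2
    exact orderOf_eq_one_iff.mp (Nat.dvd_one.mp this)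
  -- denominators nonzero on U
  have hD0 : ∀ z : F, z ^ (2 ^ m + 1) = 1 → z ^ (2 ^ k + 1) + z + 1 ≠ 0 := by
    intro z hz h0
    have hN : z ^ (2 ^ k + 1) + z ^ 2 ^ k + 1 = 0 := by
      rw [key1 z hz, h0, zero_pow (by positivity), mul_zero]
    have hq : z ^ 2 ^ k = z := by
      linear_combination hN + h0 - (z ^ (2 ^ k + 1) + 1) * htwo - z * htwo
    have hz1 : z = 1 := hone z hz hq
    rw [hz1, one_pow] at h0
    exact one_ne_zero (by linear_combination h0 - htwo)
  have hN0 : ∀ z : F, z ^ (2 ^ m + 1) = 1 → z ^ (2 ^ k + 1) + z ^ 2 ^ k + 1 ≠ 0 := by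
    intro z hz h0
    have hD : z ^ (2 ^ k + 1) + z + 1 = 0 := by
      rw [key2 z hz, h0, zero_pow (by positivity), mul_zero]
    exact hD0 z hz hD
  -- the core map lands in U
  have hgU : ∀ z : F, z ^ (2 ^ m + 1) = 1 →
      ((z ^ (2 ^ k + 1) + z ^ 2 ^ k + 1) / (z ^ (2 ^ k + 1) + z + 1)) ^ (2 ^ m + 1) = 1 := by
    intro z hz
    have hz0 : z ≠ 0 := hU0 z hz
    have hzp : z ^ (2 ^ k + 1) ≠ 0 := pow_ne_zero _ hz0
    have hkey : z ^ (2 ^ k + 1) * (z ^ (2 ^ k + 1) + z ^ 2 ^ k + 1) ^ (2 ^ m + 1)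
        = z ^ (2 ^ k + 1) * (z ^ (2 ^ k + 1) + z + 1) ^ (2 ^ m + 1) := by
      linear_combination (z ^ (2 ^ k + 1) + z + 1) * key1 z hz
        - (z ^ (2 ^ k + 1) + z ^ 2 ^ k + 1) * key2 z hz
    have heq : (z ^ (2 ^ k + 1) + z ^ 2 ^ k + 1) ^ (2 ^ m + 1)
        = (z ^ (2 ^ k + 1) + z + 1) ^ (2 ^ m + 1) := mul_left_cancel₀ hzp hkey
    rw [div_pow, heq, div_self (pow_ne_zero _ (hD0 z hz))]
  -- MapsTo
  have hmaps : Set.MapsTo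
      (fun x : F => ((x ^ (2 ^ k + 1) + x ^ 2 ^ k + 1) / (x ^ (2 ^ k + 1) + x + 1)) ^ 2 ^ i)
      {x : F | x ^ (2 ^ m + 1) = 1} {x : F | x ^ (2 ^ m + 1) = 1} := by
    intro z hz
    simp only [Set.mem_setOf_eq] at hz ⊢
    rw [← pow_mul, mul_comm, pow_mul, hgU z hz, one_pow]
  -- InjOn
  have hinj : Set.InjOn
      (fun x : F => ((x ^ (2 ^ k + 1) + x ^ 2 ^ k + 1) / (x ^ (2 ^ k + 1) + x + 1)) ^ 2 ^ i)
      {x : F | x ^ (2 ^ m + 1) = 1} := by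
    intro x hx y hy heq
    simp only [Set.mem_setOf_eq] at hx hy
    simp only at heq
    have hv : (x ^ (2 ^ k + 1) + x ^ 2 ^ k + 1) / (x ^ (2 ^ k + 1) + x + 1)
        = (y ^ (2 ^ k + 1) + y ^ 2 ^ k + 1) / (y ^ (2 ^ k + 1) + y + 1) := frob_inj2 i heq
    set v : F := (x ^ (2 ^ k + 1) + x ^ 2 ^ k + 1) / (x ^ (2 ^ k + 1) + x + 1) with hvdef
    have hvU : v ^ (2 ^ m + 1) = 1 := hgU x hx
    have hNvDx : x ^ (2 ^ k + 1) + x ^ 2 ^ k + 1 = v * (x ^ (2 ^ k + 1) + x + 1) := by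
      rw [hvdef, div_mul_cancel₀ _ (hD0 x hx)]
    have hNvDy : y ^ (2 ^ k + 1) + y ^ 2 ^ k + 1 = v * (y ^ (2 ^ k + 1) + y + 1) := by
      rw [hv, div_mul_cancel₀ _ (hD0 y hy)]
    by_cases hv1 : v = 1
    · rw [hv1, one_mul] at hNvDx hNvDy
      have hqx : x ^ 2 ^ k = x := by linear_combination hNvDx
      have hqy : y ^ 2 ^ k = y := by linear_combination hNvDy
      rw [hone x hx hqx, hone y hy hqy]
    · -- v ≠ 1 : the main case
      have hv0 : v ≠ 0 := by
        rw [hvdef]; exact div_ne_zero (hN0 x hx) (hD0 x hx)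
      have h1v : (1 : F) + v ≠ 0 := fun h => hv1 (hne_of 1 v h).symm
      set a : F := (1 + v)⁻¹ with hadef
      have ha0 : a ≠ 0 := inv_ne_zero h1v
      have hav : a * (1 + v) = 1 := inv_mul_cancel₀ h1v
      have hvQ : v ^ 2 ^ m * v = 1 := hxQx v hvU
      have haQ : a ^ 2 ^ m = a + 1 := by
        have h1vQ : (1 + v) ^ 2 ^ m * v = 1 + v := by
          rw [add_pow_char_pow, one_pow]; linear_combination hvQ
        have hinvQ : a ^ 2 ^ m * (1 + v) ^ 2 ^ m = 1 := by
          rw [hadef, ← mul_pow, inv_mul_cancel₀ h1v, one_pow]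
        have hc : (1 + v) ^ 2 ^ m * v ≠ 0 := mul_ne_zero (pow_ne_zero _ h1v) hv0
        apply mul_right_cancel₀ hc
        calc a ^ 2 ^ m * ((1 + v) ^ 2 ^ m * v) = (a ^ 2 ^ m * (1 + v) ^ 2 ^ m) * v := by ring
          _ = v := by rw [hinvQ, one_mul]
          _ = (a + 1) * (1 + v) := by linear_combination -hav - htwo
          _ = (a + 1) * ((1 + v) ^ 2 ^ m * v) := by rw [h1vQ]
      have hFx : x ^ (2 ^ k + 1) + a * x ^ 2 ^ k + (a + 1) * x + 1 = 0 := by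
        linear_combination a * hNvDx + (x ^ (2 ^ k + 1) + x + 1) * hav
          + (x ^ (2 ^ k + 1) + x + 1 - a * x ^ (2 ^ k + 1) - a) * htwo
      have hFy : y ^ (2 ^ k + 1) + a * y ^ 2 ^ k + (a + 1) * y + 1 = 0 := by
        linear_combination a * hNvDy + (y ^ (2 ^ k + 1) + y + 1) * hav
          + (y ^ (2 ^ k + 1) + y + 1 - a * y ^ (2 ^ k + 1) - a) * htwo
      -- a primitive cube root of unity ω
      have h3u : (3 : ℕ) ∣ Fintype.card Fˣ := by
        rw [Fintype.card_units, hF]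
        have h1 := two_pow_mod_three_even (k := 2 * m) (even_two_mul m)
        omega
      haveI : Fact (Nat.Prime 3) := ⟨by norm_num⟩
      obtain ⟨ζ, hζ⟩ := exists_prime_orderOf_dvd_card 3 h3u
      set ω : F := (ζ : F) with hωdef
      have hω3 : ω ^ 3 = 1 := by
        have hpow := pow_orderOf_eq_one ζ
        rw [hζ] at hpow
        rw [hωdef, ← Units.val_pow_eq_pow_val, hpow, Units.val_one]
      have hω1 : ω ≠ 1 := by
        intro h
        have hζ1 : ζ = 1 := Units.ext (by rw [← hωdef, h, Units.val_one])
        rw [hζ1, orderOf_one] at hζ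
        norm_num at hζ
      have hωeq : ω ^ 2 + ω + 1 = 0 := by
        have hfac : (ω + 1) * (ω ^ 2 + ω + 1) = 0 := by
          linear_combination hω3 + (ω ^ 2 + ω + 1) * htwo
        rcases mul_eq_zero.mp hfac with h | h
        · exact absurd (hne_of ω 1 (by linear_combination h)) hω1
        · exact h
      have hω0 : ω ≠ 0 := by
        intro h; rw [h] at hωeq; norm_num at hωeq
      have hω2 : ω ^ 2 = ω + 1 := by linear_combination hωeq - (ω + 1) * htwo
      have hω4 : ω ^ 4 = ω := by linear_combination ω * hω3
      have hω2ne0 : ω ^ 2 ≠ 0 := pow_ne_zero _ hω0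
      have hωpow1 : ∀ t : ℕ, 2 ^ t % 3 = 1 → ω ^ 2 ^ t = ω := by
        intro t ht
        have hsplit : 2 ^ t = 3 * (2 ^ t / 3) + 1 := by omega
        rw [hsplit, pow_add, pow_mul, hω3, one_pow, one_mul, pow_one]
      have hωpow2 : ∀ t : ℕ, 2 ^ t % 3 = 2 → ω ^ 2 ^ t = ω ^ 2 := by
        intro t ht
        have hsplit : 2 ^ t = 3 * (2 ^ t / 3) + 2 := by omega
        rw [hsplit, pow_add, pow_mul, hω3, one_pow, one_mul]
      have hω22 : (ω ^ 2) ^ 2 = ω := by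
        rw [← pow_mul]; norm_num; exact hω4
      by_cases hd0 : a ^ 2 + a + 1 = 0
      · -- degenerate case : a itself is a primitive cube root of unity
        have ha2 : a ^ 2 = a + 1 := by linear_combination hd0 - (a + 1) * htwo
        have ha3 : a ^ 3 = 1 := by linear_combination a * ha2 + ha2 + a * htwo
        have ha1 : a ≠ 1 := by
          intro h; rw [h] at hd0
          exact one_ne_zero (by linear_combination hd0 - htwo)
        have haU : a ^ 2 ^ m * a = 1 := by
          rw [haQ]; linear_combination ha2 + a * htwo
        have hmodd : Odd m := by
          rcases Nat.even_or_odd m with hme | hmo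
          · exfalso
            have hoa : orderOf a ∣ 3 := orderOf_dvd_of_pow_eq_one ha3
            have hoa3 : orderOf a = 3 := by
              rcases (Nat.dvd_prime (by norm_num)).mp hoa with h | h
              · exact absurd (orderOf_eq_one_iff.mp h) ha1
              · exact h
            have hdvd : orderOf a ∣ 2 ^ m + 1 :=
              orderOf_dvd_of_pow_eq_one (by rw [pow_succ a (2 ^ m)]; exact haU)
            rw [hoa3] at hdvd
            have := two_pow_mod_three_even hme
            omega
          · exact hmo
        have hkodd : Odd k := by
          rcases Nat.even_or_odd k with hke | hko
          · exfalso
            have h1 := two_pow_mod_three_even hke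
            have h2 := two_pow_mod_three_odd hmodd
            have h1k : 1 ≤ 2 ^ k := Nat.one_le_two_pow
            have h3 : (3 : ℕ) ∣ Nat.gcd (2 ^ k - 1) (2 ^ m + 1) :=
              Nat.dvd_gcd (by omega) (by omega)
            rw [hgcd2] at h3; omega
          · exact hko
        have haq : a ^ 2 ^ k = a ^ 2 := by
          have h2k : 2 ^ k % 3 = 2 := two_pow_mod_three_odd hkodd
          have hsplit : 2 ^ k = 3 * (2 ^ k / 3) + 2 := by omega
          rw [hsplit, pow_add, pow_mul, ha3, one_pow, one_mul]
        have hxa : ∀ z : F, z ^ (2 ^ k + 1) + a * z ^ 2 ^ k + (a + 1) * z + 1 = 0 → z = a := by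
          intro z hFz
          have hfac : (z + a) * (z ^ 2 ^ k + a ^ 2) = 0 := by
            linear_combination hFz + z * ha2 + ha3
          rcases mul_eq_zero.mp hfac with h | h
          · exact hne_of z a h
          · have hza : z ^ 2 ^ k = a ^ 2 ^ k := by rw [haq]; exact hne_of _ _ h
            exact frob_inj2 k hza
        rw [hxa x hFx, hxa y hFy]
      · -- main case : a is not a cube root of unity
        have haω : a + ω ≠ 0 := by
          intro h
          have ha' : a = ω := hne_of a ω h
          rw [ha'] at hd0; exact hd0 hωeq
        have haω2 : a + ω ^ 2 ≠ 0 := by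
          intro h
          have ha' : a = ω ^ 2 := hne_of a (ω ^ 2) h
          apply hd0
          rw [ha']
          linear_combination hω4 + hωeq
        have hZa : ∀ z : F, z ^ (2 ^ k + 1) + a * z ^ 2 ^ k + (a + 1) * z + 1 = 0 →
            z + a ≠ 0 := by
          intro z hFz h
          have hza : z = a := hne_of z a h
          rw [hza] at hFz
          apply hd0
          linear_combination hFz - a ^ (2 ^ k + 1) * htwo
        have hZrel : ∀ z : F, z ^ (2 ^ k + 1) + a * z ^ 2 ^ k + (a + 1) * z + 1 = 0 →
            (z ^ 2 ^ k + ω) * (z + a) = (a + ω ^ 2) * (z + ω) ∧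
            (z ^ 2 ^ k + ω ^ 2) * (z + a) = (a + ω) * (z + ω ^ 2) := by
          intro z hFz
          have hrel : z ^ 2 ^ k * (z + a) = (a + 1) * z + 1 := by
            linear_combination hFz - ((a + 1) * z + 1) * htwo
          constructor
          · linear_combination hrel - (z + ω + 1) * hω2 - ω * htwo
          · linear_combination hrel + (z - ω - 1) * hω2 + (z - ω) * htwo
        have hcross_done : (x + ω) * (y + ω ^ 2) = (y + ω) * (x + ω ^ 2) → x = y := by
          intro hcross
          linear_combination hcross - (x - y) * hω2
        rcases Nat.even_or_odd k with hke | hko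
        · -- k even ; then m must be even
          have hme : Even m := by
            rcases Nat.even_or_odd m with hme | hmo
            · exact hme
            · exfalso
              have h1 := two_pow_mod_three_even hke
              have h2 := two_pow_mod_three_odd hmo
              have h1k : 1 ≤ 2 ^ k := Nat.one_le_two_pow
              have h3 : (3 : ℕ) ∣ Nat.gcd (2 ^ k - 1) (2 ^ m + 1) :=
                Nat.dvd_gcd (by omega) (by omega)
              rw [hgcd2] at h3; omega
          have hωk : ω ^ 2 ^ k = ω := hωpow1 k (two_pow_mod_three_even hke)
          have hωm : ω ^ 2 ^ m = ω := hωpow1 m (two_pow_mod_three_even hme)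
          have hω2k : (ω ^ 2) ^ 2 ^ k = ω ^ 2 := by rw [pow_right_comm, hωk]
          have hω2m : (ω ^ 2) ^ 2 ^ m = ω ^ 2 := by rw [pow_right_comm, hωm]
          have hωnotU : ∀ z : F, z ^ (2 ^ m + 1) = 1 → z + ω ≠ 0 ∧ z + ω ^ 2 ≠ 0 := by
            intro z hz
            constructor
            · intro h
              have hzω : z = ω := hne_of z ω h
              rw [hzω, pow_succ ω (2 ^ m), hωm] at hz
              exact hω1 (by linear_combination hω3 - ω * hz)
            · intro h
              have hzω : z = ω ^ 2 := hne_of z (ω ^ 2) h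
              rw [hzω, pow_succ (ω ^ 2) (2 ^ m), hω2m] at hz
              exact hω1 (by linear_combination hz - hω4)
          have pack : ∀ z : F, z ^ (2 ^ m + 1) = 1 →
              z ^ (2 ^ k + 1) + a * z ^ 2 ^ k + (a + 1) * z + 1 = 0 →
              (z + ω ≠ 0 ∧ z + ω ^ 2 ≠ 0 ∧
               ((z + ω) / (z + ω ^ 2)) ^ 2 ^ k
                 = ((a + ω ^ 2) / (a + ω)) * ((z + ω) / (z + ω ^ 2)) ∧
               ((z + ω) / (z + ω ^ 2)) ^ 2 ^ m * ((z + ω) / (z + ω ^ 2)) = ω ^ 2) := by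
            intro z hz hFz
            obtain ⟨hz1, hz2⟩ := hωnotU z hz
            obtain ⟨hE1, hE2⟩ := hZrel z hFz
            have hdk2 : z ^ 2 ^ k + ω ^ 2 ≠ 0 := by
              have e : (z + ω ^ 2) ^ 2 ^ k = z ^ 2 ^ k + ω ^ 2 := by
                rw [add_pow_char_pow, hω2k]
              rw [← e]; exact pow_ne_zero _ hz2
            have hdm2 : z ^ 2 ^ m + ω ^ 2 ≠ 0 := by
              have e : (z + ω ^ 2) ^ 2 ^ m = z ^ 2 ^ m + ω ^ 2 := by
                rw [add_pow_char_pow, hω2m]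
              rw [← e]; exact pow_ne_zero _ hz2
            have huz : z ^ 2 ^ m * z = 1 := hxQx z hz
            refine ⟨hz1, hz2, ?_, ?_⟩
            · rw [div_pow, add_pow_char_pow, add_pow_char_pow, hωk, hω2k,
                div_mul_div_comm, div_eq_div_iff hdk2 (mul_ne_zero haω hz2)]
              linear_combination (z ^ 2 ^ k + ω ^ 2) * hE1 - (z ^ 2 ^ k + ω) * hE2
            · rw [div_pow, add_pow_char_pow, add_pow_char_pow, hωm, hω2m,
                div_mul_div_comm, div_eq_iff (mul_ne_zero hdm2 hz2)]
              linear_combination (-ω) * huz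
                - (4 + 2 * z ^ 2 ^ m + 3 * ω + ω * z ^ 2 ^ m + 2 * ω ^ 2 + ω ^ 2 * z ^ 2 ^ m
                    + ω ^ 3 + ω ^ 4 + 2 * z + z * z ^ 2 ^ m + z * ω + z * ω ^ 2) * hω2
                - (2 + z ^ 2 ^ m + 4 * ω + ω * z ^ 2 ^ m + z + z * ω) * htwo
          obtain ⟨hx1, hx2, hxq, hxQ2⟩ := pack x hx hFx
          obtain ⟨hy1, hy2, hyq, hyQ2⟩ := pack y hy hFy
          have hcX0 : (x + ω) / (x + ω ^ 2) ≠ 0 := div_ne_zero (by exact hx1) hx2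
          have hcY0 : (y + ω) / (y + ω ^ 2) ≠ 0 := div_ne_zero (by exact hy1) hy2
          have hμ0 : (a + ω ^ 2) / (a + ω) ≠ 0 := div_ne_zero haω2 haω
          set ρ : F := ((x + ω) / (x + ω ^ 2)) / ((y + ω) / (y + ω ^ 2)) with hρdef
          have hρ0 : ρ ≠ 0 := div_ne_zero hcX0 hcY0
          have hρq : ρ ^ 2 ^ k = ρ := by
            rw [hρdef, div_pow, hxq, hyq, mul_div_mul_left _ _ hμ0]
          have hρQ : ρ ^ (2 ^ m + 1) = 1 := by
            rw [hρdef, div_pow, pow_succ ((x + ω) / (x + ω ^ 2)) (2 ^ m), pow_succ ((y + ω) / (y + ω ^ 2)) (2 ^ m), hxQ2, hyQ2, div_self hω2ne0]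
          have hρk1 : ρ ^ (2 ^ k - 1) = 1 := by
            have h1 : ρ ^ (2 ^ k - 1) * ρ = 1 * ρ := by
              rw [← pow_succ, Nat.sub_add_cancel Nat.one_le_two_pow, hρq, one_mul]
            exact mul_right_cancel₀ hρ0 h1
          have hρ1 : ρ = 1 := by
            have hd1 : orderOf ρ ∣ 2 ^ k - 1 := orderOf_dvd_of_pow_eq_one hρk1
            have hd2 : orderOf ρ ∣ 2 ^ m + 1 := orderOf_dvd_of_pow_eq_one hρQ
            have hdone : orderOf ρ ∣ 1 := hgcd2 ▸ Nat.dvd_gcd hd1 hd2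
            exact orderOf_eq_one_iff.mp (Nat.dvd_one.mp hdone)
          rw [hρdef, div_eq_one_iff_eq hcY0] at hρ1
          exact hcross_done ((div_eq_div_iff hx2 hy2).mp hρ1)
        · -- k odd
          have hωk : ω ^ 2 ^ k = ω ^ 2 := hωpow2 k (two_pow_mod_three_odd hko)
          have hω2k : (ω ^ 2) ^ 2 ^ k = ω := by rw [pow_right_comm, hωk, hω22]
          have hμ0 : (a + ω) / (a + ω ^ 2) ≠ 0 := div_ne_zero haω haω2
          -- the k-part relation, valid for any z with the F-equation and z∉{ω,ω²}
          have packk : ∀ z : F, z + ω ≠ 0 → z + ω ^ 2 ≠ 0 →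
              z ^ (2 ^ k + 1) + a * z ^ 2 ^ k + (a + 1) * z + 1 = 0 →
              ((z + ω) / (z + ω ^ 2)) ^ 2 ^ k * ((z + ω) / (z + ω ^ 2))
                = (a + ω) / (a + ω ^ 2) := by
            intro z hz1 hz2 hFz
            obtain ⟨hE1, hE2⟩ := hZrel z hFz
            have hdk1 : z ^ 2 ^ k + ω ≠ 0 := by
              have e : (z + ω ^ 2) ^ 2 ^ k = z ^ 2 ^ k + ω := by
                rw [add_pow_char_pow, hω2k]
              rw [← e]; exact pow_ne_zero _ hz2
            rw [div_pow, add_pow_char_pow, add_pow_char_pow, hωk, hω2k,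
              div_mul_div_comm, div_eq_div_iff (mul_ne_zero hdk1 hz2) haω2]
            linear_combination (z ^ 2 ^ k + ω) * hE2 - (z ^ 2 ^ k + ω ^ 2) * hE1
          rcases Nat.even_or_odd m with hme | hmo
          · -- k odd, m even
            have hωm : ω ^ 2 ^ m = ω := hωpow1 m (two_pow_mod_three_even hme)
            have hω2m : (ω ^ 2) ^ 2 ^ m = ω ^ 2 := by rw [pow_right_comm, hωm]
            have hωnotU : ∀ z : F, z ^ (2 ^ m + 1) = 1 → z + ω ≠ 0 ∧ z + ω ^ 2 ≠ 0 := by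
              intro z hz
              constructor
              · intro h
                have hzω : z = ω := hne_of z ω h
                rw [hzω, pow_succ ω (2 ^ m), hωm] at hz
                exact hω1 (by linear_combination hω3 - ω * hz)
              · intro h
                have hzω : z = ω ^ 2 := hne_of z (ω ^ 2) h
                rw [hzω, pow_succ (ω ^ 2) (2 ^ m), hω2m] at hz
                exact hω1 (by linear_combination hz - hω4)
            have packQ : ∀ z : F, z ^ (2 ^ m + 1) = 1 → z + ω ≠ 0 → z + ω ^ 2 ≠ 0 →
                ((z + ω) / (z + ω ^ 2)) ^ 2 ^ m * ((z + ω) / (z + ω ^ 2)) = ω ^ 2 := by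
              intro z hz hz1 hz2
              have hdm2 : z ^ 2 ^ m + ω ^ 2 ≠ 0 := by
                have e : (z + ω ^ 2) ^ 2 ^ m = z ^ 2 ^ m + ω ^ 2 := by
                  rw [add_pow_char_pow, hω2m]
                rw [← e]; exact pow_ne_zero _ hz2
              have huz : z ^ 2 ^ m * z = 1 := hxQx z hz
              rw [div_pow, add_pow_char_pow, add_pow_char_pow, hωm, hω2m,
                div_mul_div_comm, div_eq_iff (mul_ne_zero hdm2 hz2)]
              linear_combination (-ω) * huz
                - (4 + 2 * z ^ 2 ^ m + 3 * ω + ω * z ^ 2 ^ m + 2 * ω ^ 2 + ω ^ 2 * z ^ 2 ^ m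
                    + ω ^ 3 + ω ^ 4 + 2 * z + z * z ^ 2 ^ m + z * ω + z * ω ^ 2) * hω2
                - (2 + z ^ 2 ^ m + 4 * ω + ω * z ^ 2 ^ m + z + z * ω) * htwo
            obtain ⟨hx1, hx2⟩ := hωnotU x hx
            obtain ⟨hy1, hy2⟩ := hωnotU y hy
            have hxq := packk x hx1 hx2 hFx
            have hyq := packk y hy1 hy2 hFy
            have hxQ2 := packQ x hx hx1 hx2
            have hyQ2 := packQ y hy hy1 hy2
            have hcX0 : (x + ω) / (x + ω ^ 2) ≠ 0 := div_ne_zero hx1 hx2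
            have hcY0 : (y + ω) / (y + ω ^ 2) ≠ 0 := div_ne_zero hy1 hy2
            set ρ : F := ((x + ω) / (x + ω ^ 2)) / ((y + ω) / (y + ω ^ 2)) with hρdef
            have hρ0 : ρ ≠ 0 := div_ne_zero hcX0 hcY0
            have hρk : ρ ^ (2 ^ k + 1) = 1 := by
              rw [hρdef, div_pow, pow_succ ((x + ω) / (x + ω ^ 2)) (2 ^ k), pow_succ ((y + ω) / (y + ω ^ 2)) (2 ^ k), hxq, hyq, div_self hμ0]
            have hρQ : ρ ^ (2 ^ m + 1) = 1 := by
              rw [hρdef, div_pow, pow_succ ((x + ω) / (x + ω ^ 2)) (2 ^ m), pow_succ ((y + ω) / (y + ω ^ 2)) (2 ^ m), hxQ2, hyQ2, div_self hω2ne0]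
            have hρ1 : ρ = 1 := by
              have hd1 : orderOf ρ ∣ 2 ^ k + 1 := orderOf_dvd_of_pow_eq_one hρk
              have hd2 : orderOf ρ ∣ 2 ^ m + 1 := orderOf_dvd_of_pow_eq_one hρQ
              have hgcdB := gcd_two_pow_add_one_add_one hk hm hko hme
              have hdone : orderOf ρ ∣ 1 := hgcdB ▸ Nat.dvd_gcd hd1 hd2
              exact orderOf_eq_one_iff.mp (Nat.dvd_one.mp hdone)
            rw [hρdef, div_eq_one_iff_eq hcY0] at hρ1
            exact hcross_done ((div_eq_div_iff hx2 hy2).mp hρ1)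
          · -- k odd, m odd
            have hωm : ω ^ 2 ^ m = ω ^ 2 := hωpow2 m (two_pow_mod_three_odd hmo)
            have hω2m : (ω ^ 2) ^ 2 ^ m = ω := by rw [pow_right_comm, hωm, hω22]
            have hωhq : ω ^ (2 ^ k) * ω = 1 := by rw [hωk]; linear_combination hω3
            have hznot : ∀ z : F,
                z ^ (2 ^ k + 1) + a * z ^ 2 ^ k + (a + 1) * z + 1 = 0 →
                z + ω ≠ 0 ∧ z + ω ^ 2 ≠ 0 := by
              intro z hFz
              constructor
              · intro h
                have hzω : z = ω := hne_of z ω h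
                rw [hzω, pow_succ ω (2 ^ k), hωk] at hFz
                exact haω (by linear_combination hFz - hω3 - a * hω2 - (a * ω + 1) * htwo)
              · intro h
                have hzω : z = ω ^ 2 := hne_of z (ω ^ 2) h
                rw [hzω, pow_succ (ω ^ 2) (2 ^ k), hω2k] at hFz
                exact haω2 (by linear_combination hFz - a * hω2 - (a * ω + 1) * htwo - hω3)
            have packQ : ∀ z : F, z ^ (2 ^ m + 1) = 1 → z + ω ≠ 0 → z + ω ^ 2 ≠ 0 →
                ((z + ω) / (z + ω ^ 2)) ^ 2 ^ m = ω * ((z + ω) / (z + ω ^ 2)) := by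
              intro z hz hz1 hz2
              have hdm1 : z ^ 2 ^ m + ω ≠ 0 := by
                have e : (z + ω ^ 2) ^ 2 ^ m = z ^ 2 ^ m + ω := by
                  rw [add_pow_char_pow, hω2m]
                rw [← e]; exact pow_ne_zero _ hz2
              have huz : z ^ 2 ^ m * z = 1 := hxQx z hz
              rw [div_pow, add_pow_char_pow, add_pow_char_pow, hωm, hω2m,
                ← mul_div_assoc, div_eq_div_iff hdm1 hz2]
              linear_combination (1 - ω) * huz + (1 + ω ^ 2) * hω2 + htwo
            obtain ⟨hx1, hx2⟩ := hznot x hFx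
            obtain ⟨hy1, hy2⟩ := hznot y hFy
            have hxq := packk x hx1 hx2 hFx
            have hyq := packk y hy1 hy2 hFy
            have hxQ2 := packQ x hx hx1 hx2
            have hyQ2 := packQ y hy hy1 hy2
            have hcX0 : (x + ω) / (x + ω ^ 2) ≠ 0 := div_ne_zero hx1 hx2
            have hcY0 : (y + ω) / (y + ω ^ 2) ≠ 0 := div_ne_zero hy1 hy2
            set ρ : F := ((x + ω) / (x + ω ^ 2)) / ((y + ω) / (y + ω ^ 2)) with hρdef
            have hρ0 : ρ ≠ 0 := div_ne_zero hcX0 hcY0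
            have hρk : ρ ^ (2 ^ k + 1) = 1 := by
              rw [hρdef, div_pow, pow_succ ((x + ω) / (x + ω ^ 2)) (2 ^ k), pow_succ ((y + ω) / (y + ω ^ 2)) (2 ^ k), hxq, hyq, div_self hμ0]
            have hρQ : ρ ^ 2 ^ m = ρ := by
              rw [hρdef, div_pow, hxQ2, hyQ2, mul_div_mul_left _ _ hω0]
            have hρm1 : ρ ^ (2 ^ m - 1) = 1 := by
              have h1 : ρ ^ (2 ^ m - 1) * ρ = 1 * ρ := by
                rw [← pow_succ, Nat.sub_add_cancel Nat.one_le_two_pow, hρQ, one_mul]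
              exact mul_right_cancel₀ hρ0 h1
            have hρ1 : ρ = 1 := by
              have hd1 : orderOf ρ ∣ 2 ^ k + 1 := orderOf_dvd_of_pow_eq_one hρk
              have hd2 : orderOf ρ ∣ 2 ^ m - 1 := orderOf_dvd_of_pow_eq_one hρm1
              have hgcdC := gcd_two_pow_add_one_sub_one hk hm hko hmo
              have hdone : orderOf ρ ∣ 1 := hgcdC ▸ Nat.dvd_gcd hd1 hd2
              exact orderOf_eq_one_iff.mp (Nat.dvd_one.mp hdone)
            rw [hρdef, div_eq_one_iff_eq hcY0] at hρ1
            exact hcross_done ((div_eq_div_iff hx2 hy2).mp hρ1)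
  exact ((Set.toFinite _).injOn_iff_bijOn_of_mapsTo hmaps).mp hinj
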